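/- arXiv:1108.1721 — 3 statements merged into one kernel-verified Lean document; each statement's English description precedes it below -/
import Mathlib

section
/- If a net {A_ν} of weakly continuous linear operators on E converges in the weak operator topology to an operator A and is bounded in that topology, then it converges to A in the ultra-weak topology, i.e., ∑_{i=1}^∞ λ_i ⟨x'_i, A_ν x_i⟩ → ∑_{i=1}^∞ λ_i ⟨x'_i, A x_i⟩ for every summable sequence {λ_i} and all sequences {x_i} ⊂ B ⊂ E, {x'_i} ⊂ B' ⊂ E' contained in absolutely convex bounded sets B, B' for which E_B and E'_{B'} are complete. -/
/-
Setting: `E` is a Hausdorff locally convex topological vector space over `𝕜 = ℝ` or `ℂ`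
(`RCLike 𝕜`), with `E' = E →L[𝕜] 𝕜` its (strong) dual.
-/

open Filter Topology Bornology

section Prelude

variable (𝕜 : Type) [RCLike 𝕜]

/-- A continuous linear operator on `E` is of finite rank if its range is
finite-dimensional. -/
def IsFiniteRank {E : Type} [AddCommGroup E] [Module 𝕜 E] [TopologicalSpace E]
    (A : E →L[𝕜] E) : Prop :=
  FiniteDimensional 𝕜 (LinearMap.range (A : E →ₗ[𝕜] E))

/-- The ordinary trace `sp` of a (finite-rank) operator: the trace of the endomorphism
that it induces on its image. -/
noncomputable def sp {E : Type} [AddCommGroup E] [Module 𝕜 E] [TopologicalSpace E]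
    (A : E →L[𝕜] E) : 𝕜 :=
  LinearMap.trace 𝕜 (LinearMap.range (A : E →ₗ[𝕜] E))
    ((A : E →ₗ[𝕜] E).restrict (fun x _ => LinearMap.mem_range_self _ x))

/-- The bounded approximation property: there is a net of finite-rank operators that
converges to the identity operator in the weak operator topology and is bounded in
that topology. -/
def HasBAP (E : Type) [AddCommGroup E] [Module 𝕜 E] [TopologicalSpace E] : Prop :=
  ∃ (ι : Type) (lfil : Filter ι) (T : ι → E →L[𝕜] E), lfil.NeBot ∧
    (∀ ν, IsFiniteRank 𝕜 (T ν)) ∧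
    (∀ (x : E) (f : E →L[𝕜] 𝕜), Tendsto (fun ν => f (T ν x)) lfil (𝓝 (f x))) ∧
    (∀ (x : E) (f : E →L[𝕜] 𝕜), ∃ C : ℝ, ∀ ν, ‖f (T ν x)‖ ≤ C)

/-- The approximation property: the finite-rank operators are dense in `L(E)` for the
topology of uniform convergence on precompact (totally bounded) subsets of `E`. -/
def HasAP (E : Type) [AddCommGroup E] [Module 𝕜 E] [UniformSpace E] : Prop :=
  ∀ (A : E →L[𝕜] E) (S : Set E), TotallyBounded S → ∀ U ∈ 𝓝 (0 : E),
    ∃ F : E →L[𝕜] E, IsFiniteRank 𝕜 F ∧ ∀ x ∈ S, A x - F x ∈ U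

/-- The weak approximation property: the finite-rank operators are dense in `L(E)` for
the topology of uniform convergence on absolutely convex compact subsets of `E`. -/
def HasWeakAP (E : Type) [AddCommGroup E] [Module 𝕜 E] [Module ℝ E]
    [TopologicalSpace E] : Prop :=
  ∀ (A : E →L[𝕜] E) (K : Set E), IsCompact K → Balanced 𝕜 K → Convex ℝ K →
    ∀ U ∈ 𝓝 (0 : E), ∃ F : E →L[𝕜] E, IsFiniteRank 𝕜 F ∧ ∀ x ∈ K, A x - F x ∈ U

/-- A linear operator is weakly continuous iff the composition with every continuous
linear functional is again a continuous linear functional. -/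
def IsWeaklyContinuous {E : Type} [AddCommGroup E] [Module 𝕜 E] [TopologicalSpace E]
    (A : E →ₗ[𝕜] E) : Prop :=
  ∀ f : E →L[𝕜] 𝕜, Continuous fun v => f (A v)

/-- `B` is an absolutely convex bounded set such that the normed space `E_B`
(the span of `B` with the gauge of `B` as norm) is complete, i.e. a Banach disk.
(Completeness of the normed space `E_B` is expressed as sequential completeness for
the gauge of `B`, which is equivalent since `E_B` is metrizable.) -/
def IsBanachDisk {V : Type} [AddCommGroup V] [Module 𝕜 V] [Module ℝ V]
    [TopologicalSpace V] (B : Set V) : Prop :=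
  Balanced 𝕜 B ∧ Convex ℝ B ∧ IsVonNBounded 𝕜 B ∧
    ∀ u : ℕ → V, (∀ n, u n ∈ Submodule.span 𝕜 B) →
      (∀ ε : ℝ, 0 < ε → ∃ N : ℕ, ∀ m ≥ N, ∀ n ≥ N, gauge B (u m - u n) < ε) →
      ∃ v ∈ Submodule.span 𝕜 B, ∀ ε : ℝ, 0 < ε → ∃ N : ℕ, ∀ n ≥ N, gauge B (v - u n) < ε

/-- The data of a Fredholm kernel: a summable sequence of scalars, a sequence in a
Banach disk `B ⊆ E` and a sequence in a Banach disk `B' ⊆ E'`. -/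
def FredholmKernelSeqs {E : Type} [AddCommGroup E] [Module 𝕜 E] [Module ℝ E]
    [TopologicalSpace E] [IsTopologicalAddGroup E]
    (l : ℕ → 𝕜) (x : ℕ → E) (x' : ℕ → E →L[𝕜] 𝕜) : Prop :=
  (Summable fun i => ‖l i‖) ∧
  (∃ B : Set E, IsBanachDisk 𝕜 B ∧ ∀ i, x i ∈ B) ∧
  (∃ B' : Set (E →L[𝕜] 𝕜), IsBanachDisk 𝕜 B' ∧ ∀ i, x' i ∈ B')

/-- `A` is represented as the Fredholm operator `v ↦ ∑_{i=1}^∞ λ_i ⟨x'_i, v⟩ x_i`,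
where `∑ |λ_i| < ∞`, `{x_i} ⊆ B ⊆ E` and `{x'_i} ⊆ B' ⊆ E'` with `B`, `B'` absolutely
convex bounded sets such that `E_B` and `E'_{B'}` are complete. -/
def FredholmRep {E : Type} [AddCommGroup E] [Module 𝕜 E] [Module ℝ E]
    [TopologicalSpace E] [IsTopologicalAddGroup E]
    (A : E → E) (l : ℕ → 𝕜) (x : ℕ → E) (x' : ℕ → E →L[𝕜] 𝕜) : Prop :=
  FredholmKernelSeqs 𝕜 l x x' ∧
  ∀ v : E, Tendsto (fun n => ∑ i ∈ Finset.range n, (l i * x' i v) • x i) atTop (𝓝 (A v))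

/-- `A` is represented as the nuclear operator `v ↦ ∑_{i=1}^∞ λ_i ⟨x'_i, v⟩ x_i`,
where `∑ |λ_i| < ∞`, `{x_i}` lies in an absolutely convex bounded complete set `B ⊆ E`
and `{x'_i}` is equicontinuous, i.e. lies in the polar of a neighborhood of zero. -/
def NuclearRep {E : Type} [AddCommGroup E] [Module 𝕜 E] [Module ℝ E]
    [UniformSpace E] [IsUniformAddGroup E]
    (A : E → E) (l : ℕ → 𝕜) (x : ℕ → E) (x' : ℕ → E →L[𝕜] 𝕜) : Prop :=
  (Summable fun i => ‖l i‖) ∧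
  (∃ B : Set E, Balanced 𝕜 B ∧ Convex ℝ B ∧ IsVonNBounded 𝕜 B ∧ IsComplete B ∧
    ∀ i, x i ∈ B) ∧
  (∃ U ∈ 𝓝 (0 : E), ∀ i, ∀ v ∈ U, ‖(x' i) v‖ ≤ 1) ∧
  ∀ v : E, Tendsto (fun n => ∑ i ∈ Finset.range n, (l i * x' i v) • x i) atTop (𝓝 (A v))

end Prelude

section Aux
open Set
open scoped Pointwise

section Disk
variable {𝕜 : Type} [RCLike 𝕜] {V : Type} [AddCommGroup V] [Module 𝕜 V] [Module ℝ V]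
  [IsScalarTower ℝ 𝕜 V]
variable {B : Set V}

lemma rsmul_eq (r : ℝ) (x : V) : r • x = ((r : 𝕜)) • x :=
  RCLike.real_smul_eq_coe_smul r x

/-- absolutely convex sets absorb elements of their span -/
lemma disk_absorbs_span (hb : Balanced 𝕜 B) (hc : Convex ℝ B) (h0 : (0:V) ∈ B)
    {v : V} (hv : v ∈ Submodule.span 𝕜 B) : ∃ r : ℝ, 0 < r ∧ v ∈ r • B := by
  induction hv using Submodule.span_induction with
  | mem x hx => exact ⟨1, one_pos, by simpa using hx⟩
  | zero => exact ⟨1, one_pos, by simpa using h0⟩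
  | add x y _ _ ihx ihy =>
    obtain ⟨a, ha, hxa⟩ := ihx
    obtain ⟨b, hbp, hyb⟩ := ihy
    refine ⟨a + b, by positivity, ?_⟩
    rw [hc.add_smul ha.le hbp.le]
    exact Set.add_mem_add hxa hyb
  | smul c x _ ih =>
    obtain ⟨a, ha, hxa⟩ := ih
    rcases eq_or_ne c 0 with rfl | hc0
    · exact ⟨1, one_pos, by simpa using h0⟩
    · obtain ⟨b, hbB, rfl⟩ := hxa
      refine ⟨a * ‖c‖, mul_pos ha (norm_pos_iff.2 hc0), ?_⟩
      have hub : (‖c‖⁻¹ : 𝕜) • c • b ∈ B := by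
        rw [← smul_assoc, smul_eq_mul]
        apply hb.smul_mem _ hbB
        rw [norm_mul, norm_inv, RCLike.norm_ofReal, abs_norm,
          inv_mul_cancel₀ (norm_ne_zero_iff.2 hc0)]
      refine ⟨(‖c‖⁻¹ : 𝕜) • c • b, hub, ?_⟩
      show (a * ‖c‖) • ((‖c‖⁻¹ : 𝕜) • c • b) = c • (a • b)
      rw [rsmul_eq (𝕜 := 𝕜) (a * ‖c‖), rsmul_eq (𝕜 := 𝕜) a, smul_smul, smul_smul, smul_smul]
      congr 1
      have : (‖c‖ : 𝕜) ≠ 0 := by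
        simpa using norm_ne_zero_iff.2 hc0
      push_cast
      field_simp

/-- gauge triangle inequality for absorbed points -/
lemma gauge_add_le_of_absorbed (hc : Convex ℝ B)
    {x y : V} (hx : ∃ r : ℝ, 0 < r ∧ x ∈ r • B) (hy : ∃ r : ℝ, 0 < r ∧ y ∈ r • B) :
    gauge B (x + y) ≤ gauge B x + gauge B y := by
  refine le_of_forall_pos_le_add fun ε hε => ?_
  have hxS : {r : ℝ | 0 < r ∧ x ∈ r • B}.Nonempty := ⟨hx.choose, hx.choose_spec⟩
  have hyS : {r : ℝ | 0 < r ∧ y ∈ r • B}.Nonempty := ⟨hy.choose, hy.choose_spec⟩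
  obtain ⟨a, ⟨ha0, hxa⟩, haε⟩ :=
    exists_lt_of_csInf_lt hxS (show sInf _ < gauge B x + ε/2 by
      have := gauge_nonneg (s := B) x
      unfold gauge; linarith [lt_add_of_pos_right (gauge B x) (half_pos hε)])
  obtain ⟨b, ⟨hb0, hyb⟩, hbε⟩ :=
    exists_lt_of_csInf_lt hyS (show sInf _ < gauge B y + ε/2 by
      have := gauge_nonneg (s := B) y
      unfold gauge; linarith [lt_add_of_pos_right (gauge B y) (half_pos hε)])
  have hmem : x + y ∈ (a + b) • B := by
    rw [hc.add_smul ha0.le hb0.le]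
    exact Set.add_mem_add hxa hyb
  calc gauge B (x + y) ≤ a + b := gauge_le_of_mem (by positivity) hmem
    _ ≤ gauge B x + gauge B y + ε := by linarith

/-- small gauge puts you in small dilates -/
lemma mem_smul_of_gauge_lt (hb : Balanced 𝕜 B)
    {x : V} (hx : ∃ r : ℝ, 0 < r ∧ x ∈ r • B) {ε : ℝ} (hε : 0 < ε)
    (hg : gauge B x < ε) : x ∈ ε • B := by
  have hxS : {r : ℝ | 0 < r ∧ x ∈ r • B}.Nonempty := ⟨hx.choose, hx.choose_spec⟩
  obtain ⟨t, ⟨ht0, hxt⟩, htε⟩ := exists_lt_of_csInf_lt hxS hg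
  obtain ⟨z, hz, rfl⟩ := hxt
  have h1 : ((t / ε : ℝ) : 𝕜) • z ∈ B := by
    apply hb.smul_mem _ hz
    rw [RCLike.norm_ofReal, abs_of_pos (by positivity)]
    rw [div_le_one hε]
    exact htε.le
  refine ⟨((t / ε : ℝ) : 𝕜) • z, h1, ?_⟩
  show ε • (((t / ε : ℝ) : 𝕜) • z) = t • z
  rw [rsmul_eq (𝕜 := 𝕜) ε, rsmul_eq (𝕜 := 𝕜) t, smul_smul]
  congr 1
  have hε0 : (ε : 𝕜) ≠ 0 := by exact_mod_cast hε.ne'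
  push_cast
  field_simp

end Disk

section UBP
variable {𝕜 : Type} [RCLike 𝕜] {V : Type} [AddCommGroup V] [Module 𝕜 V] [Module ℝ V]
  [IsScalarTower ℝ 𝕜 V] {B : Set V}

lemma disk_banach_steinhaus {J : Type} (hb : Balanced 𝕜 B) (hc : Convex ℝ B)
    (h0 : (0:V) ∈ B)
    (hsep : ∀ v : V, (∀ ε : ℝ, 0 < ε → v ∈ ε • B) → v = 0)
    (hcomp : ∀ u : ℕ → V, (∀ n, u n ∈ Submodule.span 𝕜 B) →
      (∀ ε : ℝ, 0 < ε → ∃ N : ℕ, ∀ m ≥ N, ∀ n ≥ N, gauge B (u m - u n) < ε) →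
      ∃ v ∈ Submodule.span 𝕜 B, ∀ ε : ℝ, 0 < ε → ∃ N : ℕ, ∀ n ≥ N, gauge B (v - u n) < ε)
    (f : J → V →ₗ[𝕜] 𝕜)
    (hfb : ∀ j, ∃ c : ℝ, ∀ x ∈ B, ‖f j x‖ ≤ c)
    (hpt : ∀ v ∈ Submodule.span 𝕜 B, ∃ C : ℝ, ∀ j, ‖f j v‖ ≤ C) :
    ∃ M : ℝ, ∀ j, ∀ x ∈ B, ‖f j x‖ ≤ M := by
  set S := Submodule.span 𝕜 B with hS
  have habs : ∀ x : S, ∃ r : ℝ, 0 < r ∧ (x:V) ∈ r • B :=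
    fun x => disk_absorbs_span hb hc h0 x.2
  have hsymm : ∀ w ∈ B, -w ∈ B := fun w hw => by
    simpa using hb.smul_mem (a := (-1:𝕜)) (by simp) hw
  letI : NormedAddCommGroup S := AddGroupNorm.toNormedAddCommGroup
    { toFun := fun x => gauge B (x:V)
      map_zero' := by simp [gauge_zero]
      add_le' := fun x y => gauge_add_le_of_absorbed hc (habs x) (habs y)
      neg' := fun x => by simpa using gauge_neg hsymm (x : V)
      eq_zero_of_map_eq_zero' := fun x hx => by
        apply Subtype.ext
        refine hsep x.1 (fun ε hε => mem_smul_of_gauge_lt hb (habs x) hε ?_)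
        have hg0 : gauge B (x : V) = 0 := hx
        rw [hg0]; exact hε }
  have hnorm : ∀ x : S, ‖x‖ = gauge B (x:V) := fun _ => rfl
  letI : NormedSpace 𝕜 S :=
    { norm_smul_le := fun c x => by
        rw [hnorm, hnorm]
        have : ((c • x : S) : V) = c • (x : V) := rfl
        rw [this, gauge_smul hb] }
  haveI : CompleteSpace S := by
    apply Metric.complete_of_cauchySeq_tendsto
    intro w hw
    have hCau := Metric.cauchySeq_iff.1 hw
    have hgC : ∀ ε : ℝ, 0 < ε → ∃ N, ∀ m ≥ N, ∀ n ≥ N,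
        gauge B ((w m : V) - (w n : V)) < ε := by
      intro ε hε
      obtain ⟨N, hN⟩ := hCau ε hε
      refine ⟨N, fun m hm n hn => ?_⟩
      have hd : dist (w m) (w n) = gauge B ((w m : V) - (w n : V)) := by
        rw [dist_eq_norm, hnorm]; norm_cast
      rw [← hd]
      exact hN m hm n hn
    obtain ⟨v, hvS, hconv⟩ := hcomp (fun n => (w n).1) (fun n => (w n).2) hgC
    refine ⟨⟨v, hvS⟩, ?_⟩
    rw [Metric.tendsto_atTop]
    intro ε hε
    obtain ⟨N, hN⟩ := hconv ε hε
    refine ⟨N, fun n hn => ?_⟩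
    have hd : dist (w n) (⟨v, hvS⟩ : S) = gauge B ((w n : V) - v) := by
      rw [dist_eq_norm, hnorm]; norm_cast
    rw [hd, ← gauge_neg hsymm, neg_sub]
    exact hN n hn
  choose c hcb using hfb
  have hbound : ∀ j (x : S), ‖((f j).comp S.subtype) x‖ ≤ (max (c j) 1) * ‖x‖ := by
    intro j x
    set c' := max (c j) 1 with hc'
    have hc'0 : (0:ℝ) < c' := lt_of_lt_of_le one_pos (le_max_right _ _)
    have key : ‖f j x.1‖ / c' ≤ gauge B (x : V) := by
      refine le_csInf ⟨(habs x).choose, (habs x).choose_spec⟩ ?_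
      rintro t ⟨ht0, hmem⟩
      obtain ⟨z, hz, hzx⟩ := hmem
      rw [div_le_iff₀ hc'0]
      have : (x : V) = t • z := hzx.symm
      rw [this, rsmul_eq (𝕜 := 𝕜), map_smul, norm_smul, RCLike.norm_ofReal,
        abs_of_pos ht0]
      have h1 : ‖f j z‖ ≤ c' := le_trans (hcb j z hz) (le_max_left _ _)
      nlinarith
    rw [hnorm]
    calc ‖((f j).comp S.subtype) x‖ = ‖f j x.1‖ := rfl
      _ ≤ c' * gauge B (x : V) := by
          rw [div_le_iff₀ hc'0] at key; linarith
    
  set g : J → S →L[𝕜] 𝕜 := fun j => LinearMap.mkContinuous ((f j).comp S.subtype) _ (hbound j)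
  have hptg : ∀ x : S, ∃ C : ℝ, ∀ j, ‖g j x‖ ≤ C := by
    intro x
    obtain ⟨C, hC⟩ := hpt x.1 x.2
    exact ⟨C, fun j => hC j⟩
  obtain ⟨C', hC'⟩ := banach_steinhaus hptg
  refine ⟨C', fun j x hx => ?_⟩
  have hxS : x ∈ S := Submodule.subset_span hx
  have h1 : ‖(⟨x, hxS⟩ : S)‖ ≤ 1 := by rw [hnorm]; exact gauge_le_one_of_mem hx
  have h2 : ‖g j ⟨x, hxS⟩‖ ≤ ‖g j‖ * ‖(⟨x, hxS⟩ : S)‖ := (g j).le_opNorm _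
  have h3 : ‖g j ⟨x, hxS⟩‖ = ‖f j x‖ := rfl
  nlinarith [norm_nonneg (g j), (g j).opNorm_nonneg, hC' j]

end UBP

section Glue
variable {𝕜 : Type} [RCLike 𝕜]

lemma zero_of_mem_all_smul {V : Type} [AddCommGroup V] [Module 𝕜 V] [Module ℝ V]
    [IsScalarTower ℝ 𝕜 V] [TopologicalSpace V]
    [IsTopologicalAddGroup V] [ContinuousSMul 𝕜 V] [T1Space V] {B : Set V}
    (hbd : IsVonNBounded 𝕜 B) (v : V) (hv : ∀ ε : ℝ, 0 < ε → v ∈ ε • B) : v = 0 := by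
  by_contra hne
  have hU : ({v}ᶜ : Set V) ∈ 𝓝 (0 : V) :=
    (isOpen_compl_singleton).mem_nhds (by simpa using (Ne.symm hne))
  have hW : balancedCore 𝕜 ({v}ᶜ) ∈ 𝓝 (0 : V) := balancedCore_mem_nhds_zero hU
  have hWbal : Balanced 𝕜 (balancedCore 𝕜 ({v}ᶜ : Set V)) := balancedCore_balanced _
  obtain ⟨r, hr⟩ := absorbs_iff_norm.1 (hbd hW)
  set m : ℝ := max r 1 with hm
  have hm1 : (1:ℝ) ≤ m := le_max_right _ _
  have hra : r ≤ ‖((m : 𝕜))‖ := by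
    rw [RCLike.norm_ofReal]
    exact le_trans (le_max_left _ _) (le_abs_self _)
  have hsub := hr _ hra
  have hεpos : (0:ℝ) < m⁻¹ := by positivity
  obtain ⟨b, hb, hbv⟩ := hv m⁻¹ hεpos
  obtain ⟨u, hu, hub⟩ := hsub hb
  have hveq : v = (((m⁻¹ : ℝ) : 𝕜) * (m : 𝕜)) • u := by
    rw [← hbv, ← hub, ← smul_smul, ← rsmul_eq (𝕜 := 𝕜)]
  have hmem : (((m⁻¹ : ℝ) : 𝕜) * (m : 𝕜)) • u ∈ balancedCore 𝕜 ({v}ᶜ : Set V) := by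
    apply hWbal.smul_mem _ hu
    rw [norm_mul, RCLike.norm_ofReal, RCLike.norm_ofReal, abs_of_pos hεpos,
      abs_of_pos (by positivity : (0:ℝ) < m), inv_mul_cancel₀ (by positivity : m ≠ 0)]
  rw [← hveq] at hmem
  exact (balancedCore_subset _ hmem) rfl

lemma norm_bdd_on_bounded {V : Type} [AddCommGroup V] [Module 𝕜 V] [TopologicalSpace V]
    {B : Set V} (hbd : IsVonNBounded 𝕜 B) (φ : V →ₗ[𝕜] 𝕜) (hφ : Continuous φ) :
    ∃ c : ℝ, ∀ x ∈ B, ‖φ x‖ ≤ c := by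
  have hU : φ ⁻¹' Metric.closedBall 0 1 ∈ 𝓝 (0 : V) := by
    have h0 : φ 0 = 0 := map_zero φ
    have := hφ.continuousAt (x := (0:V))
    apply this.preimage_mem_nhds
    rw [h0]
    exact Metric.closedBall_mem_nhds 0 one_pos
  obtain ⟨r, hr⟩ := absorbs_iff_norm.1 (hbd hU)
  set m : ℝ := max r 1 with hm
  have hra : r ≤ ‖((m : 𝕜))‖ := by
    rw [RCLike.norm_ofReal]
    exact le_trans (le_max_left _ _) (le_abs_self _)
  have hsub := hr _ hra
  refine ⟨m, fun x hx => ?_⟩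
  obtain ⟨u, hu, hux⟩ := hsub hx
  have hφu : ‖φ u‖ ≤ 1 := by simpa [mem_closedBall_zero_iff] using hu
  rw [← hux, map_smul, norm_smul, RCLike.norm_ofReal,
    abs_of_pos (by positivity : (0:ℝ) < m)]
  nlinarith [norm_nonneg (φ u), (by positivity : (0:ℝ) < m)]

lemma eval_bdd_on_bounded {E : Type} [AddCommGroup E] [Module 𝕜 E] [TopologicalSpace E]
    [IsTopologicalAddGroup E] [ContinuousSMul 𝕜 E] {B' : Set (E →L[𝕜] 𝕜)}
    (hbd : IsVonNBounded 𝕜 B') (w : E) : ∃ c : ℝ, ∀ y' ∈ B', ‖y' w‖ ≤ c :=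
  norm_bdd_on_bounded hbd
    { toFun := fun f => f w, map_add' := fun f g => rfl, map_smul' := fun c f => rfl }
    (ContinuousEvalConst.continuous_eval_const w)

end Glue

end Aux

open scoped Pointwise


variable {𝕜 : Type} [RCLike 𝕜] {E : Type} [AddCommGroup E] [Module 𝕜 E]
  [UniformSpace E] [IsUniformAddGroup E] [ContinuousSMul 𝕜 E]
  [Module ℝ E] [IsScalarTower ℝ 𝕜 E] [LocallyConvexSpace ℝ E] [T2Space E]

set_option maxHeartbeats 1000000 in
/-- If a net `{A_ν}` of weakly continuous linear operators on `E`
converges in the weak operator topology to an operator `A` and is bounded in that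
topology, then it converges to `A` in the ultra-weak topology: for every summable
`{λ_i}` and all sequences `{x_i} ⊆ B ⊆ E`, `{x'_i} ⊆ B' ⊆ E'` contained in absolutely
convex bounded sets `B`, `B'` for which `E_B` and `E'_{B'}` are complete, one has
`∑_{i=1}^∞ λ_i ⟨x'_i, A_ν x_i⟩ → ∑_{i=1}^∞ λ_i ⟨x'_i, A x_i⟩`. -/
theorem statement15
    (ι : Type) (lfil : Filter ι) (hne : lfil.NeBot)
    (Aν : ι → E →ₗ[𝕜] E) (hAν : ∀ ν, IsWeaklyContinuous 𝕜 (Aν ν))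
    (A : E →ₗ[𝕜] E)
    (hconv : ∀ (v : E) (f : E →L[𝕜] 𝕜),
      Filter.Tendsto (fun ν => f (Aν ν v)) lfil (𝓝 (f (A v))))
    (hbdd : ∀ (v : E) (f : E →L[𝕜] 𝕜), ∃ C : ℝ, ∀ ν, ‖f (Aν ν v)‖ ≤ C) :
    ∀ (l : ℕ → 𝕜) (x : ℕ → E) (x' : ℕ → E →L[𝕜] 𝕜),
      FredholmKernelSeqs 𝕜 l x x' →
      Filter.Tendsto (fun ν => ∑' i, l i * x' i (Aν ν (x i))) lfil
        (𝓝 (∑' i, l i * x' i (A (x i)))) := by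
  intro l x x' hFK
  obtain ⟨hl, ⟨B, hB, hxB⟩, ⟨B', hB', hx'B⟩⟩ := hFK
  obtain ⟨hbal, hconvB, hbdB, hcompB⟩ := hB
  obtain ⟨hbal', hconvB', hbdB', hcompB'⟩ := hB'
  have h0B : (0:E) ∈ B := by
    simpa using hbal.smul_mem (a := (0:𝕜)) (by simp) (hxB 0)
  have h0B' : (0:E →L[𝕜] 𝕜) ∈ B' := by
    have := hbal'.smul_mem (a := (0:𝕜)) (by simp) (hx'B 0)
    convert this using 1; ext v; simp
  have hsepB : ∀ v : E, (∀ ε:ℝ, 0<ε → v ∈ ε • B) → v = 0 :=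
    fun v hv => zero_of_mem_all_smul hbdB v hv
  have hsepB' : ∀ v : E →L[𝕜] 𝕜, (∀ ε:ℝ, 0<ε → v ∈ ε • B') → v = 0 :=
    fun v hv => zero_of_mem_all_smul hbdB' v hv
  -- Step B: uniform bound over ν and y' ∈ B' at each point w
  have stepB : ∀ w : E, ∃ C : ℝ, ∀ ν, ∀ y' ∈ B', ‖y' (Aν ν w)‖ ≤ C := by
    intro w
    obtain ⟨M, hM⟩ := disk_banach_steinhaus (B := B') hbal' hconvB' h0B' hsepB' hcompB'
      (f := fun ν : ι =>
        { toFun := fun f : E →L[𝕜] 𝕜 => f (Aν ν w)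
          map_add' := fun _ _ => rfl
          map_smul' := fun _ _ => rfl })
      (fun ν => eval_bdd_on_bounded hbdB' (Aν ν w))
      (fun y' _ => hbdd w y')
    exact ⟨M, fun ν y' hy' => hM ν y' hy'⟩
  -- Step C: master uniform bound
  obtain ⟨M, hM⟩ := disk_banach_steinhaus (B := B) hbal hconvB h0B hsepB hcompB
    (f := fun p : ι × {f : E →L[𝕜] 𝕜 // f ∈ B'} => (p.2.1 : E →ₗ[𝕜] 𝕜).comp (Aν p.1))
    (fun p => norm_bdd_on_bounded hbdB _ (hAν p.1 p.2.1))
    (fun v _ => by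
      obtain ⟨C, hC⟩ := stepB v
      exact ⟨C, fun p => hC p.1 p.2.1 p.2.2⟩)
  have hMν : ∀ ν i, ‖x' i (Aν ν (x i))‖ ≤ M :=
    fun ν i => hM (ν, ⟨x' i, hx'B i⟩) (x i) (hxB i)
  have hMA : ∀ i, ‖x' i (A (x i))‖ ≤ M := fun i =>
    le_of_tendsto (hconv (x i) (x' i)).norm (Eventually.of_forall (fun ν => hMν ν i))
  set M₀ : ℝ := max M 0 with hM₀
  have hM₀0 : 0 ≤ M₀ := le_max_right _ _
  set D : ℝ := 2*M₀ + 1 with hD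
  have hD0 : (0:ℝ) < D := by positivity
  set t : ι → ℕ → 𝕜 := fun ν i => l i * x' i (Aν ν (x i)) with ht
  set s : ℕ → 𝕜 := fun i => l i * x' i (A (x i)) with hs
  have hbt : ∀ ν i, ‖t ν i‖ ≤ M₀ * ‖l i‖ := by
    intro ν i
    rw [ht]
    simp only [norm_mul]
    have h1 := hMν ν i
    have h2 : ‖x' i (Aν ν (x i))‖ ≤ M₀ := le_trans h1 (le_max_left _ _)
    nlinarith [norm_nonneg (l i), norm_nonneg (x' i (Aν ν (x i)))]
  have hbs : ∀ i, ‖s i‖ ≤ M₀ * ‖l i‖ := by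
    intro i
    rw [hs]
    simp only [norm_mul]
    have h2 : ‖x' i (A (x i))‖ ≤ M₀ := le_trans (hMA i) (le_max_left _ _)
    nlinarith [norm_nonneg (l i), norm_nonneg (x' i (A (x i)))]
  have hts : ∀ ν, Summable fun i => t ν i :=
    fun ν => Summable.of_norm_bounded (hl.mul_left M₀) (hbt ν)
  have hss : Summable fun i => s i :=
    Summable.of_norm_bounded (hl.mul_left M₀) hbs
  have hdb : ∀ ν i, ‖t ν i - s i‖ ≤ D * ‖l i‖ := by
    intro ν i
    have := norm_sub_le (t ν i) (s i)
    have h1 := hbt ν i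
    have h2 := hbs i
    nlinarith [norm_nonneg (l i)]
  have hd : ∀ ν, Summable fun i => ‖t ν i - s i‖ := fun ν =>
    Summable.of_nonneg_of_le (fun i => norm_nonneg _) (hdb ν) (hl.mul_left D)
  rw [Metric.tendsto_nhds]
  intro ε hε
  -- choose the tail cutoff
  have htail0 : Tendsto (fun N => ∑' i, ‖l (i + N)‖) atTop (𝓝 0) :=
    tendsto_sum_nat_add fun i => ‖l i‖
  obtain ⟨N, hN⟩ := (Metric.tendsto_atTop.1 htail0 (ε/(2*D)) (by positivity))
  have htail : ∑' i, ‖l (i + N)‖ < ε/(2*D) := by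
    have := hN N le_rfl
    rw [Real.dist_eq, sub_zero, abs_of_nonneg (tsum_nonneg (fun i => norm_nonneg _))] at this
    exact this
  -- head tends to zero
  have hhead : Tendsto (fun ν => ∑ i ∈ Finset.range N, ‖t ν i - s i‖) lfil (𝓝 0) := by
    have hterm : ∀ i, Tendsto (fun ν => ‖t ν i - s i‖) lfil (𝓝 0) := by
      intro i
      have h1 : Tendsto (fun ν => t ν i) lfil (𝓝 (s i)) :=
        (hconv (x i) (x' i)).const_mul (l i)
      simpa using (tendsto_sub_nhds_zero_iff.2 h1).norm
    have := tendsto_finset_sum (Finset.range N) (fun i _ => hterm i)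
    simpa using this
  have hheadlt : ∀ᶠ ν in lfil, ∑ i ∈ Finset.range N, ‖t ν i - s i‖ < ε/2 :=
    hhead.eventually_lt_const (by positivity)
  filter_upwards [hheadlt] with ν hν
  rw [dist_eq_norm]
  have key : ‖∑' i, t ν i - ∑' i, s i‖ < ε := by
    have e1 : ∑' i, t ν i - ∑' i, s i = ∑' i, (t ν i - s i) :=
      (Summable.tsum_sub (hts ν) hss).symm
    rw [e1]
    have e2 : ‖∑' i, (t ν i - s i)‖ ≤ ∑' i, ‖t ν i - s i‖ :=
      norm_tsum_le_tsum_norm (hd ν)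
    have e3 : ∑' i, ‖t ν i - s i‖
        = ∑ i ∈ Finset.range N, ‖t ν i - s i‖ + ∑' i, ‖t ν (i+N) - s (i+N)‖ :=
      (Summable.sum_add_tsum_nat_add N (hd ν)).symm
    have e4 : ∑' i, ‖t ν (i+N) - s (i+N)‖ ≤ ∑' i, D * ‖l (i+N)‖ :=
      Summable.tsum_le_tsum (fun i => hdb ν (i+N))
        ((summable_nat_add_iff N).2 (hd ν))
        ((summable_nat_add_iff N).2 (hl.mul_left D))
    have e5 : ∑' i, D * ‖l (i+N)‖ = D * ∑' i, ‖l (i+N)‖ := tsum_mul_left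
    have e6 : D * ∑' i, ‖l (i+N)‖ < D * (ε/(2*D)) :=
      mul_lt_mul_of_pos_left htail hD0
    have e7 : D * (ε/(2*D)) = ε/2 := by field_simp
    calc ‖∑' i, (t ν i - s i)‖ ≤ ∑' i, ‖t ν i - s i‖ := e2
      _ = ∑ i ∈ Finset.range N, ‖t ν i - s i‖ + ∑' i, ‖t ν (i+N) - s (i+N)‖ := e3
      _ < ε/2 + ε/2 := by
          have : ∑' i, ‖t ν (i+N) - s (i+N)‖ < ε/2 := by
            calc ∑' i, ‖t ν (i+N) - s (i+N)‖ ≤ ∑' i, D * ‖l (i+N)‖ := e4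
              _ = D * ∑' i, ‖l (i+N)‖ := e5
              _ < D * (ε/(2*D)) := e6
              _ = ε/2 := e7
          linarith
      _ = ε := by ring
  exact key
end

section
/- If the identity operator on E is the limit in the weak operator topology of a countable sequence {I_n} of finite-rank operators, then every Fredholm operator F on E possesses a well-defined trace, and tr F = lim_{n→∞} sp(F∘I_n), where sp denotes the ordinary trace of a finite-rank operator. -/
/-
Setting: `E` is a Hausdorff locally convex topological vector space over `𝕜 = ℝ` or `ℂ`
(`RCLike 𝕜`), with `E' = E →L[𝕜] 𝕜` its (strong) dual.
-/

open Filter Topology Bornology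

section Statement16Aux
open Filter Topology Bornology Submodule Set Pointwise

section Aux
variable {𝕜 : Type} [RCLike 𝕜]

namespace St16

variable {V : Type} [AddCommGroup V] [Module 𝕜 V] [Module ℝ V] [IsScalarTower ℝ 𝕜 V]

lemma real_smul_eq_coe_smul (r : ℝ) (v : V) : r • v = ((r : 𝕜)) • v := by
  rw [← smul_one_smul 𝕜 r v, RCLike.real_smul_eq_coe_mul, mul_one]

lemma smul_mem_disk {B : Set V} (hb : Balanced 𝕜 B) {c : 𝕜} (hc : c ≠ 0) {r : ℝ} {v : V}
    (hv : v ∈ r • B) : c • v ∈ (‖c‖ * r) • B := by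
  obtain ⟨b, hbB, rfl⟩ := hv
  have hcnorm : ((‖c‖ : ℝ) : 𝕜) ≠ 0 := by
    simpa using (norm_ne_zero_iff.2 hc)
  have hd : ‖(((‖c‖ : ℝ) : 𝕜)⁻¹ * c : 𝕜)‖ ≤ 1 := by
    rw [norm_mul, norm_inv, RCLike.norm_ofReal, abs_of_nonneg (norm_nonneg c),
      inv_mul_cancel₀ (norm_ne_zero_iff.2 hc)]
  refine ⟨_, hb.smul_mem hd hbB, ?_⟩
  show (‖c‖ * r) • ((((‖c‖ : ℝ) : 𝕜)⁻¹ * c) • b) = c • (r • b)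
  rw [real_smul_eq_coe_smul (𝕜 := 𝕜) (‖c‖ * r), real_smul_eq_coe_smul (𝕜 := 𝕜) r, smul_smul,
    smul_smul]
  congr 1
  push_cast
  field_simp

lemma mem_span_disk {B : Set V} (hb : Balanced 𝕜 B) (hc : Convex ℝ B) (h0 : (0 : V) ∈ B)
    {v : V} (hv : v ∈ span 𝕜 B) : ∃ r : ℝ, 0 < r ∧ v ∈ r • B := by
  induction hv using Submodule.span_induction with
  | mem w hw => exact ⟨1, one_pos, ⟨w, hw, one_smul ℝ w⟩⟩
  | zero => exact ⟨1, one_pos, ⟨0, h0, smul_zero 1⟩⟩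
  | add x y hx hy ihx ihy =>
    obtain ⟨r, hr, hxr⟩ := ihx
    obtain ⟨s, hs, hys⟩ := ihy
    exact ⟨r + s, by linarith, by
      rw [hc.add_smul hr.le hs.le]; exact add_mem_add hxr hys⟩
  | smul c x hx ih =>
    obtain ⟨r, hr, hxr⟩ := ih
    rcases eq_or_ne c 0 with rfl | hc0
    · exact ⟨1, one_pos, by rw [zero_smul]; exact ⟨0, h0, smul_zero 1⟩⟩
    · exact ⟨‖c‖ * r, mul_pos (norm_pos_iff.2 hc0) hr, smul_mem_disk hb hc0 hxr⟩

lemma exists_lt_gauge {B : Set V} {v : V} (hx : ∃ r : ℝ, 0 < r ∧ v ∈ r • B) {ε : ℝ}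
    (hε : 0 < ε) : ∃ r : ℝ, 0 < r ∧ v ∈ r • B ∧ r < gauge B v + ε := by
  have hne : {r : ℝ | 0 < r ∧ v ∈ r • B}.Nonempty := hx
  have hlt : sInf {r : ℝ | 0 < r ∧ v ∈ r • B} < gauge B v + ε :=
    lt_add_of_pos_right _ hε
  obtain ⟨r, hr, hrlt⟩ := exists_lt_of_csInf_lt hne hlt
  exact ⟨r, hr.1, hr.2, hrlt⟩

lemma gauge_add' {B : Set V} (hc : Convex ℝ B) {x y : V} (hx : ∃ r : ℝ, 0 < r ∧ x ∈ r • B)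
    (hy : ∃ r : ℝ, 0 < r ∧ y ∈ r • B) : gauge B (x + y) ≤ gauge B x + gauge B y := by
  refine le_of_forall_pos_le_add fun ε hε => ?_
  obtain ⟨a, ha, hxa, haa⟩ := exists_lt_gauge hx (half_pos hε)
  obtain ⟨b, hb, hyb, hbb⟩ := exists_lt_gauge hy (half_pos hε)
  have hmem : x + y ∈ (a + b) • B := by
    rw [hc.add_smul ha.le hb.le]; exact add_mem_add hxa hyb
  have := gauge_le_of_mem (by positivity) hmem
  linarith

lemma gauge_smul_le' {B : Set V} (hb : Balanced 𝕜 B) {v : V}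
    (hx : ∃ r : ℝ, 0 < r ∧ v ∈ r • B) (c : 𝕜) : gauge B (c • v) ≤ ‖c‖ * gauge B v := by
  rcases eq_or_ne c 0 with rfl | hc0
  · simp
  have hcpos : (0:ℝ) < ‖c‖ := norm_pos_iff.2 hc0
  refine le_of_forall_pos_le_add fun ε hε => ?_
  obtain ⟨r, hr, hvr, hrl⟩ := exists_lt_gauge hx (div_pos hε hcpos)
  have h1 := gauge_le_of_mem (mul_nonneg (norm_nonneg c) hr.le) (smul_mem_disk hb hc0 hvr)
  have h2 : ‖c‖ * r ≤ ‖c‖ * (gauge B v + ε / ‖c‖) :=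
    mul_le_mul_of_nonneg_left hrl.le (norm_nonneg c)
  have h3 : ‖c‖ * (gauge B v + ε / ‖c‖) = ‖c‖ * gauge B v + ε := by
    field_simp
  linarith

lemma gauge_neg' {B : Set V} (hb : Balanced 𝕜 B) (v : V) : gauge B (-v) = gauge B v :=
  gauge_neg (fun x hx => by simpa [neg_one_smul 𝕜 x] using hb.smul_mem (a := (-1 : 𝕜)) (by simp) hx) v

lemma norm_le_gauge_of_bound {B : Set V} (T : V →ₗ[𝕜] 𝕜) {M : ℝ} (hM : 0 ≤ M)
    (hTB : ∀ w ∈ B, ‖T w‖ ≤ M) {v : V} (hv : ∃ r : ℝ, 0 < r ∧ v ∈ r • B) :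
    ‖T v‖ ≤ M * gauge B v := by
  refine le_of_forall_pos_le_add fun ε hε => ?_
  obtain ⟨r, hr, hvr, hrl⟩ := exists_lt_gauge hv (div_pos hε (by linarith : (0:ℝ) < M + 1))
  obtain ⟨b, hbB, rfl⟩ := hvr
  have h1 : ‖T (r • b)‖ = r * ‖T b‖ := by
    rw [real_smul_eq_coe_smul (𝕜 := 𝕜), map_smul, smul_eq_mul, norm_mul, RCLike.norm_ofReal,
      abs_of_pos hr]
  have h2 : ‖T b‖ ≤ M := hTB b hbB
  have h3 : r * ‖T b‖ ≤ r * M := mul_le_mul_of_nonneg_left h2 hr.le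
  have h4 : r * M ≤ (gauge B (r • b) + ε / (M + 1)) * M :=
    mul_le_mul_of_nonneg_right hrl.le hM
  have h5 : ε / (M + 1) * M ≤ ε := by
    rw [div_mul_eq_mul_div, div_le_iff₀ (by linarith)]
    nlinarith [hε.le]
  nlinarith [gauge_nonneg (s := B) (r • b)]


lemma uniform_bound {B : Set V} (hbal : Balanced 𝕜 B) (hcon : Convex ℝ B) (h0 : (0 : V) ∈ B)
    (hcomp : ∀ u : ℕ → V, (∀ n, u n ∈ span 𝕜 B) →
      (∀ ε : ℝ, 0 < ε → ∃ N : ℕ, ∀ m ≥ N, ∀ n ≥ N, gauge B (u m - u n) < ε) →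
      ∃ v ∈ span 𝕜 B, ∀ ε : ℝ, 0 < ε → ∃ N : ℕ, ∀ n ≥ N, gauge B (v - u n) < ε)
    {ι : Type} (T : ι → V →ₗ[𝕜] 𝕜)
    (hbd : ∀ i, ∃ M : ℝ, ∀ w ∈ B, ‖T i w‖ ≤ M)
    (hpt : ∀ v : V, ∃ C : ℝ, ∀ i, ‖T i v‖ ≤ C) :
    ∃ C : ℝ, 0 ≤ C ∧ ∀ i, ∀ w ∈ B, ‖T i w‖ ≤ C := by
  classical
  have habs : ∀ v : V, v ∈ span 𝕜 B → ∃ r : ℝ, 0 < r ∧ v ∈ r • B :=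
    fun v hv => mem_span_disk hbal hcon h0 hv
  let p : AddGroupSeminorm ↥(span 𝕜 B) :=
    { toFun := fun v => gauge B (v : V)
      map_zero' := by simp
      add_le' := fun a b => gauge_add' hcon (habs _ a.2) (habs _ b.2)
      neg' := fun a => gauge_neg' hbal (a : V) }
  letI : SeminormedAddCommGroup ↥(span 𝕜 B) := AddGroupSeminorm.toSeminormedAddCommGroup p
  letI : NormedSpace 𝕜 ↥(span 𝕜 B) := ⟨fun c a => gauge_smul_le' hbal (habs _ a.2) c⟩
  have hnormeq : ∀ a : ↥(span 𝕜 B), ‖a‖ = gauge B (a : V) := fun _ => rfl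
  haveI : CompleteSpace ↥(span 𝕜 B) := by
    refine Metric.complete_of_cauchySeq_tendsto fun u hu => ?_
    rw [Metric.cauchySeq_iff] at hu
    obtain ⟨v, hvD, hvconv⟩ := hcomp (fun n => (u n : V)) (fun n => (u n).2) (fun ε hε => by
      obtain ⟨N, hN⟩ := hu ε hε
      exact ⟨N, fun m hm n hn => by simpa [dist_eq_norm, hnormeq] using hN m hm n hn⟩)
    refine ⟨⟨v, hvD⟩, ?_⟩
    rw [Metric.tendsto_atTop]
    intro ε hε
    obtain ⟨N, hN⟩ := hvconv ε hε
    refine ⟨N, fun n hn => ?_⟩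
    have : dist (u n) (⟨v, hvD⟩ : ↥(span 𝕜 B)) = gauge B ((u n : V) - v) := by
      rw [dist_eq_norm, hnormeq]; rfl
    rw [this, ← gauge_neg' hbal, neg_sub]
    exact hN n hn
  choose M hM using hbd
  let S : ι → ↥(span 𝕜 B) →L[𝕜] 𝕜 := fun i =>
    LinearMap.mkContinuous ((T i).comp (span 𝕜 B).subtype) (max (M i) 0) (fun a => by
      have := norm_le_gauge_of_bound (B := B) (T i) (le_max_right (M i) 0)
        (fun w hw => le_trans (hM i w hw) (le_max_left _ _)) (habs _ a.2)
      simpa [hnormeq] using this)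
  obtain ⟨C', hC'⟩ := banach_steinhaus (g := S) (fun a => by
    obtain ⟨C, hC⟩ := hpt (a : V)
    exact ⟨C, fun i => hC i⟩)
  refine ⟨max C' 0, le_max_right _ _, fun i w hw => ?_⟩
  have hmem : w ∈ span 𝕜 B := subset_span hw
  have h1 : ‖S i ⟨w, hmem⟩‖ ≤ ‖S i‖ * ‖(⟨w, hmem⟩ : ↥(span 𝕜 B))‖ := (S i).le_opNorm _
  have h2 : ‖(⟨w, hmem⟩ : ↥(span 𝕜 B))‖ ≤ 1 := by
    rw [hnormeq]; exact gauge_le_one_of_mem hw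
  have h3 : ‖S i‖ ≤ C' := hC' i
  have h4 : (0:ℝ) ≤ ‖S i‖ := norm_nonneg _
  have h5 : ‖T i w‖ = ‖S i ⟨w, hmem⟩‖ := rfl
  have h6 : (0:ℝ) ≤ ‖(⟨w, hmem⟩ : ↥(span 𝕜 B))‖ := norm_nonneg _
  have h7 : C' ≤ max C' 0 := le_max_left _ _
  nlinarith

end St16
end Aux

section Main
variable {𝕜 : Type} [RCLike 𝕜] {E : Type} [AddCommGroup E] [Module 𝕜 E]
  [UniformSpace E] [IsUniformAddGroup E] [ContinuousSMul 𝕜 E]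
  [Module ℝ E] [IsScalarTower ℝ 𝕜 E] [LocallyConvexSpace ℝ E] [T2Space E]

namespace St16

lemma bound_on_vonN {B : Set E} (hB : IsVonNBounded 𝕜 B) (g : E →L[𝕜] 𝕜) :
    ∃ M : ℝ, ∀ w ∈ B, ‖g w‖ ≤ M := by
  have h2 := hB.image g
  rw [NormedSpace.isVonNBounded_iff'] at h2
  obtain ⟨r, hr⟩ := h2
  exact ⟨r, fun w hw => hr _ ⟨w, hw, rfl⟩⟩

/-- Evaluation at a point, as a continuous linear map on the strong dual. -/
def evalCLM (v : E) : (E →L[𝕜] 𝕜) →L[𝕜] 𝕜 :=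
  { toFun := fun f => f v
    map_add' := fun f g => rfl
    map_smul' := fun c f => rfl
    cont := continuous_eval_const v }

lemma bound_on_vonN_dual {B' : Set (E →L[𝕜] 𝕜)} (hB' : IsVonNBounded 𝕜 B') (v : E) :
    ∃ M : ℝ, ∀ f ∈ B', ‖f v‖ ≤ M := by
  have h2 := hB'.image (evalCLM (𝕜 := 𝕜) v)
  rw [NormedSpace.isVonNBounded_iff'] at h2
  obtain ⟨r, hr⟩ := h2
  exact ⟨r, fun f hf => hr _ ⟨f, hf, rfl⟩⟩

lemma rep_linear {F : E → E} {l : ℕ → 𝕜} {x : ℕ → E} {x' : ℕ → E →L[𝕜] 𝕜}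
    (hF : FredholmRep 𝕜 F l x x') : ∃ Fl : E →ₗ[𝕜] E, ∀ v, Fl v = F v := by
  have hadd : ∀ u v : E, F (u + v) = F u + F v := by
    intro u v
    have h1 := hF.2 (u + v)
    have h2 := (hF.2 u).add (hF.2 v)
    have heq : (fun n => ∑ i ∈ Finset.range n, (l i * x' i (u + v)) • x i)
        = fun n => (∑ i ∈ Finset.range n, (l i * x' i u) • x i)
          + ∑ i ∈ Finset.range n, (l i * x' i v) • x i := by
      funext n
      rw [← Finset.sum_add_distrib]
      refine Finset.sum_congr rfl fun i _ => ?_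
      rw [map_add, mul_add, add_smul]
    rw [heq] at h1
    exact tendsto_nhds_unique h1 h2
  have hsmul : ∀ (c : 𝕜) (v : E), F (c • v) = c • F v := by
    intro c v
    have h1 := hF.2 (c • v)
    have h2 := (hF.2 v).const_smul c
    have heq : (fun n => ∑ i ∈ Finset.range n, (l i * x' i (c • v)) • x i)
        = fun n => c • ∑ i ∈ Finset.range n, (l i * x' i v) • x i := by
      funext n
      rw [Finset.smul_sum]
      refine Finset.sum_congr rfl fun i _ => ?_
      rw [map_smul, smul_eq_mul, smul_smul, mul_left_comm]
    rw [heq] at h1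
    exact tendsto_nhds_unique h1 h2
  exact ⟨{ toFun := F, map_add' := hadd, map_smul' := fun c v => hsmul c v }, fun v => rfl⟩

lemma trace_restrict_mono {M : Type} [AddCommGroup M] [Module 𝕜 M] (A : M →ₗ[𝕜] M)
    {U U' : Submodule 𝕜 M} [FiniteDimensional 𝕜 U] [FiniteDimensional 𝕜 U']
    (hle : U ≤ U') (hA : ∀ v : M, A v ∈ U) :
    LinearMap.trace 𝕜 U (A.restrict (fun v _ => hA v)) =
      LinearMap.trace 𝕜 U' (A.restrict (fun v _ => hle (hA v))) := by
  let c : U →ₗ[𝕜] U' := Submodule.inclusion hle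
  let d : U' →ₗ[𝕜] U := (A ∘ₗ U'.subtype).codRestrict U (fun v => hA _)
  have h1 : A.restrict (fun v _ => hA v) = d ∘ₗ c := by
    ext u; rfl
  have h2 : A.restrict (fun v _ => hle (hA v)) = c ∘ₗ d := by
    ext u; rfl
  rw [h1, h2, LinearMap.trace_comp_comm']

lemma summable_term {l : ℕ → 𝕜} {x : ℕ → E} {x' : ℕ → E →L[𝕜] 𝕜}
    (hl : Summable fun i => ‖l i‖) {B : Set E} (hB : IsVonNBounded 𝕜 B) (hxB : ∀ i, x i ∈ B)
    {B' : Set (E →L[𝕜] 𝕜)} (hB' : IsVonNBounded 𝕜 B') (hx'B' : ∀ i, x' i ∈ B')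
    (φ : E →L[𝕜] 𝕜) (v : E) :
    Summable fun i => (l i * x' i v) * φ (x i) := by
  obtain ⟨Mv, hMv⟩ := bound_on_vonN_dual hB' v
  obtain ⟨Mφ, hMφ⟩ := bound_on_vonN hB φ
  refine Summable.of_norm_bounded (g := fun i => ‖l i‖ * (max Mv 0 * max Mφ 0))
    (hl.mul_right _) (fun i => ?_)
  rw [norm_mul, norm_mul]
  have h1 : ‖x' i v‖ ≤ max Mv 0 := le_trans (hMv _ (hx'B' i)) (le_max_left _ _)
  have h2 : ‖φ (x i)‖ ≤ max Mφ 0 := le_trans (hMφ _ (hxB i)) (le_max_left _ _)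
  calc ‖l i‖ * ‖x' i v‖ * ‖φ (x i)‖
      ≤ ‖l i‖ * (max Mv 0) * (max Mφ 0) :=
        mul_le_mul (mul_le_mul le_rfl h1 (norm_nonneg _) (norm_nonneg _)) h2
          (norm_nonneg _) (by positivity)
    _ = ‖l i‖ * ((max Mv 0) * (max Mφ 0)) := by ring

lemma apply_rep {F : E → E} {l : ℕ → 𝕜} {x : ℕ → E} {x' : ℕ → E →L[𝕜] 𝕜}
    (hF : FredholmRep 𝕜 F l x x') {B : Set E} (hB : IsVonNBounded 𝕜 B) (hxB : ∀ i, x i ∈ B)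
    {B' : Set (E →L[𝕜] 𝕜)} (hB' : IsVonNBounded 𝕜 B') (hx'B' : ∀ i, x' i ∈ B')
    (φ : E →L[𝕜] 𝕜) (v : E) :
    φ (F v) = ∑' i, (l i * x' i v) * φ (x i) := by
  have hsm := summable_term hF.1.1 hB hxB hB' hx'B' φ v
  have h1 : Tendsto (fun n => ∑ i ∈ Finset.range n, (l i * x' i v) * φ (x i)) atTop
      (𝓝 (φ (F v))) := by
    have h := (φ.continuous.tendsto (F v)).comp (hF.2 v)
    have heq : (fun n => φ (∑ i ∈ Finset.range n, (l i * x' i v) • x i))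
        = fun n => ∑ i ∈ Finset.range n, (l i * x' i v) * φ (x i) := by
      funext n
      rw [map_sum]
      exact Finset.sum_congr rfl fun i _ => by rw [map_smul, smul_eq_mul]
    rw [← heq]
    exact h
  exact tendsto_nhds_unique h1 hsm.hasSum.tendsto_sum_nat

lemma sp_eq {F : E → E} {l : ℕ → 𝕜} {x : ℕ → E} {x' : ℕ → E →L[𝕜] 𝕜}
    (hF : FredholmRep 𝕜 F l x x') (A : E →L[𝕜] E) (hA : IsFiniteRank 𝕜 A)
    (G : E →L[𝕜] E) (hG : ∀ v, G v = F (A v)) :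
    sp 𝕜 G = ∑' i, l i * x' i (A (x i)) := by
  classical
  obtain ⟨Fl, hFl⟩ := rep_linear hF
  obtain ⟨hl, ⟨B, hB, hxB⟩, ⟨B', hB', hx'B'⟩⟩ := hF.1
  set W := LinearMap.range ((A : E →L[𝕜] E) : E →ₗ[𝕜] E) with hWdef
  haveI : FiniteDimensional 𝕜 W := hA
  set g : E →ₗ[𝕜] W := ((A : E →L[𝕜] E) : E →ₗ[𝕜] E).codRestrict W
    (fun v => LinearMap.mem_range_self _ v) with hgdef
  set f : W →ₗ[𝕜] E := Fl ∘ₗ W.subtype with hfdef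
  set U := LinearMap.range f with hUdef
  haveI : FiniteDimensional 𝕜 U := inferInstance
  have hR : ∀ v : E, (G : E →ₗ[𝕜] E) v ∈ U := by
    intro v
    refine ⟨g v, ?_⟩
    show Fl (A v) = G v
    rw [hFl, hG]
  have hRle : LinearMap.range (G : E →ₗ[𝕜] E) ≤ U := by
    rintro y ⟨v, rfl⟩; exact hR v
  haveI : FiniteDimensional 𝕜 (LinearMap.range (G : E →ₗ[𝕜] E)) :=
    Submodule.finiteDimensional_of_le hRle
  have step1 : sp 𝕜 G = LinearMap.trace 𝕜 U ((G : E →ₗ[𝕜] E).restrict (fun v _ => hR v)) :=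
    trace_restrict_mono (G : E →ₗ[𝕜] E) hRle (fun v => LinearMap.mem_range_self _ v)
  have step2 : LinearMap.trace 𝕜 U ((G : E →ₗ[𝕜] E).restrict (fun v _ => hR v)) =
      LinearMap.trace 𝕜 W (g ∘ₗ f) := by
    let fb : W →ₗ[𝕜] U := f.rangeRestrict
    let gb : U →ₗ[𝕜] W := g ∘ₗ U.subtype
    have h1 : (G : E →ₗ[𝕜] E).restrict (fun v _ => hR v) = fb ∘ₗ gb := by
      ext u
      show G (u : E) = f (g (u : E))
      rw [hG]
      show F (A (u : E)) = Fl (A (u : E))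
      rw [hFl]
    have h2 : g ∘ₗ f = gb ∘ₗ fb := by ext w; rfl
    rw [h1, h2, LinearMap.trace_comp_comm']
  let b : Module.Basis (Fin (Module.finrank 𝕜 W)) 𝕜 W := Module.finBasis 𝕜 W
  have step3 : LinearMap.trace 𝕜 W (g ∘ₗ f) = ∑ k, (b.repr ((g ∘ₗ f) (b k))) k := by
    rw [LinearMap.trace_eq_matrix_trace 𝕜 b, Matrix.trace]
    exact Finset.sum_congr rfl fun k _ => by rw [Matrix.diag, LinearMap.toMatrix_apply]
  let gc : E →L[𝕜] W := A.codRestrict W (fun v => LinearMap.mem_range_self _ v)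
  let ψ : Fin (Module.finrank 𝕜 W) → E →L[𝕜] 𝕜 := fun k =>
    (LinearMap.toContinuousLinearMap (b.coord k)).comp gc
  have hψ : ∀ (k) (v : E), ψ k v = b.repr (gc v) k := by
    intro k v
    show (LinearMap.toContinuousLinearMap (b.coord k)) (gc v) = _
    rw [LinearMap.coe_toContinuousLinearMap']
    exact b.coord_apply _ _
  have step3b : ∀ k, (b.repr ((g ∘ₗ f) (b k))) k = ψ k (F (b k : E)) := by
    intro k
    have : (g ∘ₗ f) (b k) = gc (F (b k : E)) := by
      show g (Fl (b k : E)) = gc (F (b k : E))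
      rw [hFl]
      rfl
    rw [this, hψ]
  have step4 : ∀ k, ψ k (F (b k : E)) = ∑' i, (l i * x' i (b k : E)) * ψ k (x i) :=
    fun k => apply_rep ⟨⟨hl, ⟨B, hB, hxB⟩, ⟨B', hB', hx'B'⟩⟩, hF.2⟩ hB.2.2.1 hxB hB'.2.2.1
      hx'B' (ψ k) (b k : E)
  have step5 : ∑ k, ∑' i, (l i * x' i (b k : E)) * ψ k (x i)
      = ∑' i, ∑ k, (l i * x' i (b k : E)) * ψ k (x i) :=
    (Summable.tsum_finsetSum (fun k _ => summable_term hl hB.2.2.1 hxB hB'.2.2.1 hx'B' (ψ k) _)).symm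
  have step6 : ∀ i, ∑ k, (l i * x' i (b k : E)) * ψ k (x i) = l i * x' i (A (x i)) := by
    intro i
    have hrepr : ∑ k, ψ k (x i) • ((b k : W) : E) = A (x i) := by
      have h := b.sum_repr (gc (x i))
      calc ∑ k, ψ k (x i) • ((b k : W) : E)
          = ((∑ k, b.repr (gc (x i)) k • b k : W) : E) := by
            rw [Submodule.coe_sum]
            exact Finset.sum_congr rfl fun k _ => by rw [hψ, Submodule.coe_smul]
        _ = ((gc (x i) : W) : E) := by rw [h]
        _ = A (x i) := rfl
    calc ∑ k, (l i * x' i (b k : E)) * ψ k (x i)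
        = l i * ∑ k, ψ k (x i) * x' i (b k : E) := by
          rw [Finset.mul_sum]
          exact Finset.sum_congr rfl fun k _ => by ring
      _ = l i * x' i (∑ k, ψ k (x i) • ((b k : W) : E)) := by
          congr 1
          rw [map_sum]
          exact Finset.sum_congr rfl fun k _ => by rw [map_smul, smul_eq_mul]
      _ = l i * x' i (A (x i)) := by rw [hrepr]
  calc sp 𝕜 G = LinearMap.trace 𝕜 W (g ∘ₗ f) := step1.trans step2
    _ = ∑ k, (b.repr ((g ∘ₗ f) (b k))) k := step3
    _ = ∑ k, ∑' i, (l i * x' i (b k : E)) * ψ k (x i) := by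
          exact Finset.sum_congr rfl fun k _ => (step3b k).trans (step4 k)
    _ = ∑' i, ∑ k, (l i * x' i (b k : E)) * ψ k (x i) := step5
    _ = ∑' i, l i * x' i (A (x i)) := tsum_congr step6

lemma kernel_bound (I : ℕ → E →L[𝕜] E)
    (hconv : ∀ (x : E) (f : E →L[𝕜] 𝕜), Tendsto (fun n => f (I n x)) atTop (𝓝 (f x)))
    {l : ℕ → 𝕜} {x : ℕ → E} {x' : ℕ → E →L[𝕜] 𝕜} (hK : FredholmKernelSeqs 𝕜 l x x') :
    ∃ C : ℝ, 0 ≤ C ∧ (∀ n i, ‖x' i (I n (x i))‖ ≤ C) ∧ (∀ i, ‖x' i (x i)‖ ≤ C) := by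
  obtain ⟨hl, ⟨B, hB, hxB⟩, ⟨B', hB', hx'B'⟩⟩ := hK
  have h0B : (0 : E) ∈ B := by
    have := hB.1.smul_mem (a := (0:𝕜)) (by simp) (hxB 0)
    simpa using this
  have h0B' : (0 : E →L[𝕜] 𝕜) ∈ B' := by
    have := hB'.1.smul_mem (a := (0:𝕜)) (by simp) (hx'B' 0)
    convert this using 1
    exact (zero_smul 𝕜 (x' 0)).symm
  let J : Option ℕ → E →L[𝕜] E := fun o => o.elim (ContinuousLinearMap.id 𝕜 E) I
  have hptf : ∀ (v : E) (f : E →L[𝕜] 𝕜), ∃ C : ℝ, ∀ o : Option ℕ, ‖f (J o v)‖ ≤ C := by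
    intro v f
    obtain ⟨c, hc⟩ := ((hconv v f).norm).bddAbove_range
    refine ⟨max c ‖f v‖, fun o => ?_⟩
    match o with
    | none => exact le_max_right _ _
    | some n => exact le_trans (hc ⟨n, rfl⟩) (le_max_left _ _)
  have stepA : ∀ v : E, ∃ Cv : ℝ, ∀ (o : Option ℕ), ∀ f ∈ B', ‖f (J o v)‖ ≤ Cv := by
    intro v
    obtain ⟨C, _, hC⟩ := uniform_bound (𝕜 := 𝕜) hB'.1 hB'.2.1 h0B' hB'.2.2.2
      (fun o : Option ℕ => (evalCLM (J o v)).toLinearMap)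
      (fun o => bound_on_vonN_dual hB'.2.2.1 (J o v))
      (fun f => hptf v f)
    exact ⟨C, fun o f hf => hC o f hf⟩
  choose Cv hCv using stepA
  obtain ⟨C, hC0, hC⟩ := uniform_bound (𝕜 := 𝕜) hB.1 hB.2.1 h0B hB.2.2.2
    (fun p : Option ℕ × {f : E →L[𝕜] 𝕜 // f ∈ B'} =>
      ((p.2.1.comp (J p.1) : E →L[𝕜] 𝕜) : E →ₗ[𝕜] 𝕜))
    (fun p => bound_on_vonN hB.2.2.1 (p.2.1.comp (J p.1)))
    (fun v => ⟨Cv v, fun p => hCv v p.1 p.2.1 p.2.2⟩)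
  refine ⟨C, hC0, fun n i => ?_, fun i => ?_⟩
  · exact hC (some n, ⟨x' i, hx'B' i⟩) (x i) (hxB i)
  · exact hC (none, ⟨x' i, hx'B' i⟩) (x i) (hxB i)

lemma key (I : ℕ → E →L[𝕜] E) (hfr : ∀ n, IsFiniteRank 𝕜 (I n))
    (hconv : ∀ (x : E) (f : E →L[𝕜] 𝕜), Tendsto (fun n => f (I n x)) atTop (𝓝 (f x)))
    {F : E → E} {l : ℕ → 𝕜} {x : ℕ → E} {x' : ℕ → E →L[𝕜] 𝕜}
    (hF : FredholmRep 𝕜 F l x x') (G : ℕ → E →L[𝕜] E) (hG : ∀ n v, G n v = F (I n v)) :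
    Tendsto (fun n => sp 𝕜 (G n)) atTop (𝓝 (∑' i, l i * x' i (x i))) := by
  have hsp : ∀ n, sp 𝕜 (G n) = ∑' i, l i * x' i (I n (x i)) :=
    fun n => sp_eq hF (I n) (hfr n) (G n) (hG n)
  obtain ⟨C, hC0, hC1, _⟩ := kernel_bound I hconv hF.1
  have h := tendsto_tsum_of_dominated_convergence
    (f := fun (n : ℕ) i => l i * x' i (I n (x i)))
    (g := fun i => l i * x' i (x i)) (bound := fun i => ‖l i‖ * C)
    (hF.1.1.mul_right C)
    (fun i => (hconv (x i) (x' i)).const_mul (l i))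
    (Eventually.of_forall fun n i => by
      rw [norm_mul]
      exact mul_le_mul_of_nonneg_left (hC1 n i) (norm_nonneg _))
  exact h.congr fun n => (hsp n).symm

lemma exG (I : ℕ → E →L[𝕜] E) (hfr : ∀ n, IsFiniteRank 𝕜 (I n))
    {F : E → E} {l : ℕ → 𝕜} {x : ℕ → E} {x' : ℕ → E →L[𝕜] 𝕜}
    (hF : FredholmRep 𝕜 F l x x') :
    ∃ G : ℕ → E →L[𝕜] E, ∀ n v, G n v = F (I n v) := by
  obtain ⟨Fl, hFl⟩ := rep_linear hF
  have h : ∀ n, ∃ Gn : E →L[𝕜] E, ∀ v, Gn v = F (I n v) := by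
    intro n
    haveI : FiniteDimensional 𝕜 (LinearMap.range ((I n : E →L[𝕜] E) : E →ₗ[𝕜] E)) := hfr n
    refine ⟨(LinearMap.toContinuousLinearMap
        (Fl ∘ₗ (LinearMap.range ((I n : E →L[𝕜] E) : E →ₗ[𝕜] E)).subtype)).comp
      ((I n).codRestrict _ (fun v => LinearMap.mem_range_self _ v)), fun v => ?_⟩
    simp only [ContinuousLinearMap.comp_apply, LinearMap.coe_toContinuousLinearMap',
      LinearMap.comp_apply, Submodule.subtype_apply, ContinuousLinearMap.coe_codRestrict_apply]
    exact hFl _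
  choose G hG using h
  exact ⟨G, hG⟩

end St16
end Main

end Statement16Aux


variable {𝕜 : Type} [RCLike 𝕜] {E : Type} [AddCommGroup E] [Module 𝕜 E]
  [UniformSpace E] [IsUniformAddGroup E] [ContinuousSMul 𝕜 E]
  [Module ℝ E] [IsScalarTower ℝ 𝕜 E] [LocallyConvexSpace ℝ E] [T2Space E]

/-- If the identity operator on `E` is the limit in the weak operator
topology of a countable sequence `{I_n}` of finite-rank operators, then every Fredholm
operator `F` on `E` possesses a well-defined trace (any two Fredholm representations
yield the same trace), and `tr F = lim_{n→∞} sp (F ∘ I_n)`, where `sp` is the ordinary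
trace of a finite-rank operator. -/
theorem statement16
    (I : ℕ → E →L[𝕜] E) (hfr : ∀ n, IsFiniteRank 𝕜 (I n))
    (hconv : ∀ (x : E) (f : E →L[𝕜] 𝕜),
      Filter.Tendsto (fun n => f (I n x)) Filter.atTop (𝓝 (f x))) :
    (∀ (F : E → E) (l : ℕ → 𝕜) (x : ℕ → E) (x' : ℕ → E →L[𝕜] 𝕜)
        (μ : ℕ → 𝕜) (y : ℕ → E) (y' : ℕ → E →L[𝕜] 𝕜),
      FredholmRep 𝕜 F l x x' → FredholmRep 𝕜 F μ y y' →
      ∑' i, l i * x' i (x i) = ∑' j, μ j * y' j (y j)) ∧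
    (∀ (F : E → E) (l : ℕ → 𝕜) (x : ℕ → E) (x' : ℕ → E →L[𝕜] 𝕜),
      FredholmRep 𝕜 F l x x' →
      ∀ G : ℕ → E →L[𝕜] E, (∀ (n : ℕ) (v : E), G n v = F (I n v)) →
        Filter.Tendsto (fun n => sp 𝕜 (G n)) Filter.atTop
          (𝓝 (∑' i, l i * x' i (x i)))) := by
  constructor
  · intro F l x x' μ y y' hF1 hF2
    obtain ⟨G, hG⟩ := St16.exG I hfr hF1
    have t1 := St16.key I hfr hconv hF1 G hG
    have t2 := St16.key I hfr hconv hF2 G hG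
    exact tendsto_nhds_unique t1 t2
  · intro F l x x' hF G hG
    exact St16.key I hfr hconv hF G hG
end

section
/- If a Hausdorff locally convex space E possesses a Schauder basis {e_i} (or even only a weak Schauder basis) with biorthogonal sequence {e'_i} ⊂ E', then every Fredholm operator F on E possesses a well-defined trace, the series ∑_{i=1}^∞ ⟨e'_i, F e_i⟩ (the matrix trace of F) converges, and tr F = ∑_{i=1}^∞ ⟨e'_i, F e_i⟩. -/
/-
Setting: `E` is a Hausdorff locally convex topological vector space over `𝕜 = ℝ` or `ℂ`
(`RCLike 𝕜`), with `E' = E →L[𝕜] 𝕜` its (strong) dual.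
-/

open Filter Topology Bornology
open Pointwise

section Aux
variable {𝕜 : Type} [RCLike 𝕜] {V : Type} [AddCommGroup V] [Module 𝕜 V]
  [Module ℝ V] [IsScalarTower ℝ 𝕜 V]

lemma aux_zero_mem {B : Set V} (hbal : Balanced 𝕜 B) (hne : B.Nonempty) : (0 : V) ∈ B := by
  obtain ⟨b, hb⟩ := hne
  have := hbal (0 : 𝕜) (by simp) (Set.smul_mem_smul_set (a := (0:𝕜)) hb)
  simpa using this

lemma aux_mem_smul_of_le {B : Set V} (hbal : Balanced 𝕜 B) {a r : ℝ} (ha : 0 < a) (har : a ≤ r)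
    {x : V} (hx : x ∈ a • B) : x ∈ r • B := by
  obtain ⟨b, hb, rfl⟩ := hx
  have hr : 0 < r := ha.trans_le har
  have hmem : ((a / r : ℝ) : 𝕜) • b ∈ B := by
    apply hbal ((a / r : ℝ) : 𝕜) ?_ (Set.smul_mem_smul_set hb)
    rw [RCLike.norm_ofReal, abs_of_nonneg (by positivity)]
    exact div_le_one_of_le₀ har hr.le
  refine ⟨((a / r : ℝ) : 𝕜) • b, hmem, ?_⟩
  show r • (((a / r : ℝ) : 𝕜) • b) = a • b
  rw [RCLike.real_smul_eq_coe_smul (K := 𝕜) r, smul_smul, ← RCLike.ofReal_mul,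
    mul_div_cancel₀ _ hr.ne', RCLike.real_smul_eq_coe_smul (K := 𝕜) a]

lemma aux_span_absorbs {B : Set V} (hbal : Balanced 𝕜 B) (hconv : Convex ℝ B) (hne : B.Nonempty)
    {x : V} (hx : x ∈ Submodule.span 𝕜 B) : ∃ r : ℝ, 0 < r ∧ x ∈ r • B := by
  induction hx using Submodule.span_induction with
  | mem y hy => exact ⟨1, one_pos, by simpa using Set.smul_mem_smul_set (a := (1:ℝ)) hy⟩
  | zero => exact ⟨1, one_pos, by
      simpa using Set.smul_mem_smul_set (a := (1:ℝ)) (aux_zero_mem hbal hne)⟩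
  | add y z _ _ ihy ihz =>
    obtain ⟨r, hr, hyr⟩ := ihy
    obtain ⟨s, hs, hzs⟩ := ihz
    exact ⟨r + s, by positivity, by
      rw [hconv.add_smul hr.le hs.le]; exact Set.add_mem_add hyr hzs⟩
  | smul c y _ ih =>
    obtain ⟨r, hr, hyr⟩ := ih
    obtain ⟨b, hb, rfl⟩ := hyr
    refine ⟨r * (‖c‖ + 1), by positivity, ?_⟩
    have hpos : (0:ℝ) < ‖c‖ + 1 := by positivity
    have hc0 : ((‖c‖ + 1 : ℝ) : 𝕜) ≠ 0 := RCLike.ofReal_ne_zero.mpr hpos.ne'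
    set d : 𝕜 := c / ((‖c‖ + 1 : ℝ) : 𝕜) with hd
    have hdmem : d • b ∈ B := by
      apply hbal d ?_ (Set.smul_mem_smul_set hb)
      rw [hd, norm_div, RCLike.norm_ofReal, abs_of_nonneg hpos.le]
      exact div_le_one_of_le₀ (by linarith) hpos.le
    refine ⟨d • b, hdmem, ?_⟩
    show (r * (‖c‖ + 1)) • (d • b) = c • (r • b)
    rw [RCLike.real_smul_eq_coe_smul (K := 𝕜) (r * (‖c‖ + 1)),
      RCLike.real_smul_eq_coe_smul (K := 𝕜) r, smul_smul, smul_smul, RCLike.ofReal_mul]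
    congr 1
    rw [hd, mul_assoc, mul_div_assoc', mul_div_cancel_left₀ c hc0, mul_comm]

lemma aux_gauge_lt_mem {B : Set V} (hbal : Balanced 𝕜 B) (hconv : Convex ℝ B) (hne : B.Nonempty)
    {x : V} (hx : x ∈ Submodule.span 𝕜 B) {r : ℝ} (hr : gauge B x < r) : x ∈ r • B := by
  have hnonempty : {t : ℝ | 0 < t ∧ x ∈ t • B}.Nonempty := by
    obtain ⟨t, ht, hxt⟩ := aux_span_absorbs hbal hconv hne hx
    exact ⟨t, ht, hxt⟩
  have hbdd : BddBelow {t : ℝ | 0 < t ∧ x ∈ t • B} := ⟨0, fun t ht => ht.1.le⟩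
  have : sInf {t : ℝ | 0 < t ∧ x ∈ t • B} < r := hr
  obtain ⟨a, ⟨ha, hxa⟩, har⟩ := (csInf_lt_iff hbdd hnonempty).mp this
  exact aux_mem_smul_of_le hbal ha har.le hxa

lemma aux_gauge_add_le {B : Set V} (hbal : Balanced 𝕜 B) (hconv : Convex ℝ B) (hne : B.Nonempty)
    {x y : V} (hx : x ∈ Submodule.span 𝕜 B) (hy : y ∈ Submodule.span 𝕜 B) :
    gauge B (x + y) ≤ gauge B x + gauge B y := by
  refine le_of_forall_pos_le_add fun ε hε => ?_
  have hx' : x ∈ (gauge B x + ε / 2) • B :=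
    aux_gauge_lt_mem hbal hconv hne hx (by linarith)
  have hy' : y ∈ (gauge B y + ε / 2) • B :=
    aux_gauge_lt_mem hbal hconv hne hy (by linarith)
  have hxy : x + y ∈ ((gauge B x + ε / 2) + (gauge B y + ε / 2)) • B := by
    rw [hconv.add_smul (add_nonneg (gauge_nonneg _) (by positivity))
      (add_nonneg (gauge_nonneg _) (by positivity))]
    exact Set.add_mem_add hx' hy'
  have h0 : (0:ℝ) ≤ (gauge B x + ε / 2) + (gauge B y + ε / 2) :=
    add_nonneg (add_nonneg (gauge_nonneg _) (by positivity))
      (add_nonneg (gauge_nonneg _) (by positivity))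
  calc gauge B (x + y) ≤ (gauge B x + ε / 2) + (gauge B y + ε / 2) :=
        gauge_le_of_mem h0 hxy
    _ = gauge B x + gauge B y + ε := by ring

end Aux

section Disk

variable (𝕜 : Type) [RCLike 𝕜] {V : Type} [AddCommGroup V] [Module 𝕜 V]

def GaugeSpace (B : Set V) : Type := ↥(Submodule.span 𝕜 B)

variable {B : Set V}

instance : AddCommGroup (GaugeSpace 𝕜 B) :=
  inferInstanceAs (AddCommGroup ↥(Submodule.span 𝕜 B))
instance : Module 𝕜 (GaugeSpace 𝕜 B) :=
  inferInstanceAs (Module 𝕜 ↥(Submodule.span 𝕜 B))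
instance [Module ℝ V] [IsScalarTower ℝ 𝕜 V] : Module ℝ (GaugeSpace 𝕜 B) :=
  inferInstanceAs (Module ℝ ↥(Submodule.span 𝕜 B))

def GaugeSpace.toV (w : GaugeSpace 𝕜 B) : V := Subtype.val w

lemma GaugeSpace.memSpan (w : GaugeSpace 𝕜 B) : GaugeSpace.toV 𝕜 w ∈ Submodule.span 𝕜 B :=
  Subtype.prop w

def GaugeSpace.toLM [Module ℝ V] [IsScalarTower ℝ 𝕜 V] :
    GaugeSpace 𝕜 B →ₗ[ℝ] V where
  toFun := GaugeSpace.toV 𝕜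
  map_add' _ _ := rfl
  map_smul' _ _ := rfl

end Disk

theorem banachDisk_ub {𝕜 : Type} [RCLike 𝕜] {V : Type} [AddCommGroup V] [Module 𝕜 V]
    [Module ℝ V] [IsScalarTower ℝ 𝕜 V] [TopologicalSpace V] [IsTopologicalAddGroup V]
    {B : Set V} (hB : IsBanachDisk 𝕜 B) (hne : B.Nonempty)
    {ι : Type} (g : ι → V →L[𝕜] 𝕜)
    (hpt : ∀ v : V, v ∈ Submodule.span 𝕜 B → ∃ C, ∀ i, ‖g i v‖ ≤ C) :
    ∃ C : ℝ, 0 ≤ C ∧ ∀ i, ∀ b ∈ B, ‖g i b‖ ≤ C := by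
  obtain ⟨hbal, hconv, hbdd, hcompl⟩ := hB
  have hsymm : ∀ v ∈ B, -v ∈ B := fun v hv => by
    simpa [neg_one_smul] using hbal (-1 : 𝕜) (by simp) (Set.smul_mem_smul_set hv)
  letI : SeminormedAddCommGroup (GaugeSpace 𝕜 B) :=
    AddGroupSeminorm.toSeminormedAddCommGroup
      { toFun := fun w => gauge B (GaugeSpace.toV 𝕜 w)
        map_zero' := gauge_zero
        add_le' := fun w₁ w₂ =>
          aux_gauge_add_le hbal hconv hne (GaugeSpace.memSpan 𝕜 w₁) (GaugeSpace.memSpan 𝕜 w₂)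
        neg' := fun w => gauge_neg hsymm _ }
  have hnorm : ∀ w : GaugeSpace 𝕜 B, ‖w‖ = gauge B (GaugeSpace.toV 𝕜 w) := fun _ => rfl
  letI : NormedSpace ℝ (GaugeSpace 𝕜 B) :=
    { norm_smul_le := fun r w => by
        rw [hnorm, hnorm]
        have : GaugeSpace.toV 𝕜 (r • w) = r • GaugeSpace.toV 𝕜 w := rfl
        rw [this, RCLike.real_smul_eq_coe_smul (K := 𝕜), gauge_smul hbal, RCLike.norm_ofReal,
          Real.norm_eq_abs] }
  letI : CompleteSpace (GaugeSpace 𝕜 B) := by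
    apply Metric.complete_of_cauchySeq_tendsto
    intro u hu
    have hdist : ∀ m n, dist (u m) (u n) = gauge B (GaugeSpace.toV 𝕜 (u m) - GaugeSpace.toV 𝕜 (u n)) :=
      fun m n => by rw [dist_eq_norm, hnorm]; rfl
    obtain ⟨v, hv, hlim⟩ := hcompl (fun n => GaugeSpace.toV 𝕜 (u n))
      (fun n => GaugeSpace.memSpan 𝕜 (u n))
      (fun ε hε => by
        obtain ⟨N, hN⟩ := Metric.cauchySeq_iff.mp hu ε hε
        exact ⟨N, fun m hm n hn => by rw [← hdist]; exact hN m hm n hn⟩)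
    refine ⟨(⟨v, hv⟩ : ↥(Submodule.span 𝕜 B)), Metric.tendsto_atTop.mpr fun ε hε => ?_⟩
    obtain ⟨N, hN⟩ := hlim ε hε
    refine ⟨N, fun n hn => ?_⟩
    have : dist (u n) (⟨v, hv⟩ : ↥(Submodule.span 𝕜 B)) =
        gauge B (GaugeSpace.toV 𝕜 (u n) - v) :=
      (dist_eq_norm (u n) (show GaugeSpace 𝕜 B from ⟨v, hv⟩)).trans (hnorm _)
    rw [this, ← neg_sub, gauge_neg hsymm]
    exact hN n hn
  -- per-functional bound on B
  have hbound : ∀ i, ∃ C, 0 ≤ C ∧ ∀ b ∈ B, ‖g i b‖ ≤ C := by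
    intro i
    have himg : IsVonNBounded 𝕜 (⇑(g i) '' B) := hbdd.image (g i)
    rw [NormedSpace.isVonNBounded_iff, isBounded_iff_forall_norm_le] at himg
    obtain ⟨C, hC⟩ := himg
    exact ⟨max C 0, le_max_right _ _, fun b hb =>
      (hC _ (Set.mem_image_of_mem _ hb)).trans (le_max_left _ _)⟩
  choose C0 hC0 hC0' using hbound
  have key : ∀ i (w : GaugeSpace 𝕜 B),
      ‖(((g i).toLinearMap.restrictScalars ℝ).comp (GaugeSpace.toLM 𝕜)) w‖ ≤ C0 i * ‖w‖ := by
    intro i w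
    have hval : (((g i).toLinearMap.restrictScalars ℝ).comp (GaugeSpace.toLM 𝕜)) w
        = g i (GaugeSpace.toV 𝕜 w) := rfl
    rw [hval]
    refine le_of_forall_pos_le_add fun ε hε => ?_
    have h01 : (0:ℝ) < C0 i + 1 := by linarith [hC0 i]
    have hδpos : 0 < ε / (C0 i + 1) := div_pos hε h01
    have hmem : GaugeSpace.toV 𝕜 w ∈ (‖w‖ + ε / (C0 i + 1)) • B := by
      apply aux_gauge_lt_mem hbal hconv hne (GaugeSpace.memSpan 𝕜 w)
      rw [← hnorm]; linarith
    obtain ⟨b, hb, hbe⟩ := hmem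
    have hwpos : (0:ℝ) ≤ ‖w‖ + ε / (C0 i + 1) := add_nonneg (norm_nonneg _) hδpos.le
    have hval2 : ‖g i (GaugeSpace.toV 𝕜 w)‖ = (‖w‖ + ε / (C0 i + 1)) * ‖g i b‖ := by
      rw [← hbe]
      beta_reduce
      rw [RCLike.real_smul_eq_coe_smul (K := 𝕜), map_smul, norm_smul,
        RCLike.norm_ofReal, abs_of_nonneg hwpos]
    rw [hval2]
    have h1 : (‖w‖ + ε / (C0 i + 1)) * ‖g i b‖ ≤ (‖w‖ + ε / (C0 i + 1)) * C0 i :=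
      mul_le_mul_of_nonneg_left (hC0' i b hb) hwpos
    have h2 : C0 i * (ε / (C0 i + 1)) ≤ ε := by
      rw [mul_div_assoc', div_le_iff₀ h01]
      nlinarith [hC0 i, hε.le]
    nlinarith [norm_nonneg w, hC0 i]
  let gg : ι → GaugeSpace 𝕜 B →L[ℝ] 𝕜 := fun i =>
    LinearMap.mkContinuous
      (((g i).toLinearMap.restrictScalars ℝ).comp (GaugeSpace.toLM 𝕜)) (C0 i) (key i)
  obtain ⟨C', hC'⟩ := banach_steinhaus (g := gg) (fun w => by
    obtain ⟨C, hC⟩ := hpt (GaugeSpace.toV 𝕜 w) (GaugeSpace.memSpan 𝕜 w)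
    exact ⟨C, fun i => by
      exact hC i⟩)
  refine ⟨max C' 0, le_max_right _ _, fun i b hb => ?_⟩
  set w : GaugeSpace 𝕜 B := (⟨b, Submodule.subset_span hb⟩ : ↥(Submodule.span 𝕜 B)) with hw
  have hw1 : ‖w‖ ≤ 1 := by rw [hnorm]; exact gauge_le_one_of_mem hb
  have happ : g i b = gg i w := by
    simp [gg, LinearMap.mkContinuous_apply, hw]
    rfl
  calc ‖g i b‖ = ‖gg i w‖ := by rw [happ]
    _ ≤ ‖gg i‖ * ‖w‖ := (gg i).le_opNorm w
    _ ≤ max C' 0 * 1 :=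
      mul_le_mul ((hC' i).trans (le_max_left _ _)) hw1 (norm_nonneg _) (le_max_right _ _)
    _ = max C' 0 := mul_one _

def evalCLM {𝕜 : Type} [RCLike 𝕜] {E : Type} [AddCommGroup E] [Module 𝕜 E]
    [TopologicalSpace E] [IsTopologicalAddGroup E] [ContinuousSMul 𝕜 E] (v : E) :
    (E →L[𝕜] 𝕜) →L[𝕜] 𝕜 :=
  { toLinearMap :=
      { toFun := fun f => f v
        map_add' := fun f g => rfl
        map_smul' := fun c f => rfl }
    cont := continuous_eval_const v }

@[simp] lemma evalCLM_apply {𝕜 : Type} [RCLike 𝕜] {E : Type} [AddCommGroup E] [Module 𝕜 E]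
    [TopologicalSpace E] [IsTopologicalAddGroup E] [ContinuousSMul 𝕜 E] (v : E)
    (f : E →L[𝕜] 𝕜) : evalCLM v f = f v := rfl

section Main

variable {𝕜 : Type} [RCLike 𝕜] {E : Type} [AddCommGroup E] [Module 𝕜 E]
  [UniformSpace E] [IsUniformAddGroup E] [ContinuousSMul 𝕜 E]
  [Module ℝ E] [IsScalarTower ℝ 𝕜 E] [LocallyConvexSpace ℝ E] [T2Space E]

theorem matrixTrace_tendsto (e : ℕ → E) (e' : ℕ → E →L[𝕜] 𝕜)
    (hexp : ∀ (x : E) (f : E →L[𝕜] 𝕜),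
      Filter.Tendsto (fun n => f (∑ i ∈ Finset.range n, (e' i x) • e i))
        Filter.atTop (𝓝 (f x)))
    (F : E → E) (l : ℕ → 𝕜) (x : ℕ → E) (x' : ℕ → E →L[𝕜] 𝕜)
    (hrep : FredholmRep 𝕜 F l x x') :
    Filter.Tendsto (fun n => ∑ i ∈ Finset.range n, e' i (F (e i))) Filter.atTop
      (𝓝 (∑' i, l i * x' i (x i))) := by
  obtain ⟨⟨hl, ⟨B, hB, hxB⟩, ⟨B', hB', hx'B⟩⟩, hFconv⟩ := hrep
  set S : ℕ → E →L[𝕜] E := fun n => ∑ j ∈ Finset.range n, (e' j).smulRight (e j) with hS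
  have hSapp : ∀ n v, S n v = ∑ j ∈ Finset.range n, (e' j v) • e j := by
    intro n v
    simp [hS, ContinuousLinearMap.sum_apply]
  have hexp' : ∀ (v : E) (f : E →L[𝕜] 𝕜), Tendsto (fun n => f (S n v)) atTop (𝓝 (f v)) := by
    intro v f
    simpa only [hSapp] using hexp v f
  have hneB : B.Nonempty := ⟨x 0, hxB 0⟩
  have hneB' : B'.Nonempty := ⟨x' 0, hx'B 0⟩
  have step1 : ∀ f : E →L[𝕜] 𝕜, ∃ C, ∀ n : ℕ, ∀ b ∈ B, ‖f (S n b)‖ ≤ C := by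
    intro f
    obtain ⟨C, _, hC⟩ := banachDisk_ub hB hneB (fun n => f.comp (S n)) (fun v _ => by
      have hbd : BddAbove (Set.range fun n => ‖f (S n v)‖) := (hexp' v f).norm.bddAbove_range
      obtain ⟨C, hC⟩ := hbd
      exact ⟨C, fun n => hC ⟨n, rfl⟩⟩)
    exact ⟨C, fun n b hb => hC n b hb⟩
  obtain ⟨M, hM0, hM⟩ := banachDisk_ub hB' hneB'
      (fun p : ℕ × ℕ => evalCLM (S p.1 (x p.2)))
      (fun f _ => by
        obtain ⟨C, hC⟩ := step1 f
        exact ⟨C, fun p => hC p.1 (x p.2) (hxB p.2)⟩)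
  have hM' : ∀ n i : ℕ, ‖x' i (S n (x i))‖ ≤ M := fun n i => hM (n, i) (x' i) (hx'B i)
  have hMx : ∀ i, ‖x' i (x i)‖ ≤ M := by
    intro i
    exact le_of_tendsto (hexp' (x i) (x' i)).norm
      (Filter.Eventually.of_forall fun n => hM' n i)
  have hlM : Summable fun i => ‖l i‖ * M := hl.mul_right M
  have hsum : Summable fun i => l i * x' i (x i) :=
    Summable.of_norm_bounded hlM (fun i => by
      rw [norm_mul]; exact mul_le_mul_of_nonneg_left (hMx i) (norm_nonneg _))
  have hsn : ∀ n, Summable fun i => l i * x' i (S n (x i)) := fun n =>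
    Summable.of_norm_bounded hlM (fun i => by
      rw [norm_mul]; exact mul_le_mul_of_nonneg_left (hM' n i) (norm_nonneg _))
  have hkey : ∀ n, ∑ j ∈ Finset.range n, e' j (F (e j)) = ∑' i, l i * x' i (S n (x i)) := by
    intro n
    have h1 : Tendsto (fun m => ∑ i ∈ Finset.range m, l i * x' i (S n (x i))) atTop
        (𝓝 (∑' i, l i * x' i (S n (x i)))) := (hsn n).hasSum.tendsto_sum_nat
    have hswap : ∀ m, ∑ i ∈ Finset.range m, l i * x' i (S n (x i))
        = ∑ j ∈ Finset.range n, ∑ i ∈ Finset.range m, e' j ((l i * x' i (e j)) • x i) := by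
      intro m
      have hx' : ∀ i, x' i (S n (x i)) = ∑ j ∈ Finset.range n, (e' j (x i)) * x' i (e j) := by
        intro i
        rw [hSapp, map_sum]
        exact Finset.sum_congr rfl fun j _ => by rw [ContinuousLinearMap.map_smul, smul_eq_mul]
      calc ∑ i ∈ Finset.range m, l i * x' i (S n (x i))
          = ∑ i ∈ Finset.range m, ∑ j ∈ Finset.range n, l i * (e' j (x i) * x' i (e j)) := by
            refine Finset.sum_congr rfl fun i _ => ?_
            rw [hx' i, Finset.mul_sum]
        _ = ∑ j ∈ Finset.range n, ∑ i ∈ Finset.range m, l i * (e' j (x i) * x' i (e j)) :=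
            Finset.sum_comm
        _ = ∑ j ∈ Finset.range n, ∑ i ∈ Finset.range m, e' j ((l i * x' i (e j)) • x i) := by
            refine Finset.sum_congr rfl fun j _ => Finset.sum_congr rfl fun i _ => ?_
            rw [ContinuousLinearMap.map_smul, smul_eq_mul]
            ring
    have hj : ∀ j, Tendsto (fun m => ∑ i ∈ Finset.range m, e' j ((l i * x' i (e j)) • x i))
        atTop (𝓝 (e' j (F (e j)))) := by
      intro j
      have := ((e' j).continuous.tendsto (F (e j))).comp (hFconv (e j))
      simpa [Function.comp_def, map_sum] using this
    have h2 : Tendsto (fun m => ∑ i ∈ Finset.range m, l i * x' i (S n (x i))) atTop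
        (𝓝 (∑ j ∈ Finset.range n, e' j (F (e j)))) := by
      have := tendsto_finset_sum (Finset.range n) (fun j _ => hj j)
      exact Tendsto.congr (fun m => (hswap m).symm) this
    exact tendsto_nhds_unique h2 h1
  have hfin : Tendsto (fun n => ∑' i, l i * x' i (S n (x i))) atTop
      (𝓝 (∑' i, l i * x' i (x i))) := by
    refine tendsto_tsum_of_dominated_convergence hlM
      (fun i => tendsto_const_nhds.mul (hexp' (x i) (x' i)))
      (Filter.Eventually.of_forall fun n i => ?_)
    rw [norm_mul]
    exact mul_le_mul_of_nonneg_left (hM' n i) (norm_nonneg _)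
  exact Tendsto.congr (fun n => (hkey n).symm) hfin

end Main


variable {𝕜 : Type} [RCLike 𝕜] {E : Type} [AddCommGroup E] [Module 𝕜 E]
  [UniformSpace E] [IsUniformAddGroup E] [ContinuousSMul 𝕜 E]
  [Module ℝ E] [IsScalarTower ℝ 𝕜 E] [LocallyConvexSpace ℝ E] [T2Space E]

/-- If `E` possesses a Schauder basis `{e_i}` (or even only a weak
Schauder basis) with biorthogonal sequence `{e'_i} ⊆ E'`, then every Fredholm operator
`F` on `E` possesses a well-defined trace (any two Fredholm representations yield the
same value), the matrix-trace series `∑_{i=1}^∞ ⟨e'_i, F e_i⟩` converges, and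
`tr F = ∑_{i=1}^∞ ⟨e'_i, F e_i⟩`. -/
theorem statement18 (e : ℕ → E) (e' : ℕ → E →L[𝕜] 𝕜)
    (hexp : ∀ (x : E) (f : E →L[𝕜] 𝕜),
      Filter.Tendsto (fun n => f (∑ i ∈ Finset.range n, (e' i x) • e i))
        Filter.atTop (𝓝 (f x)))
    (huniq : ∀ (x : E) (ξ : ℕ → 𝕜),
      (∀ f : E →L[𝕜] 𝕜, Filter.Tendsto (fun n => f (∑ i ∈ Finset.range n, ξ i • e i))
          Filter.atTop (𝓝 (f x))) →
      ∀ i, ξ i = e' i x) :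
    (∀ (F : E → E) (l : ℕ → 𝕜) (x : ℕ → E) (x' : ℕ → E →L[𝕜] 𝕜)
        (μ : ℕ → 𝕜) (y : ℕ → E) (y' : ℕ → E →L[𝕜] 𝕜),
      FredholmRep 𝕜 F l x x' → FredholmRep 𝕜 F μ y y' →
      ∑' i, l i * x' i (x i) = ∑' j, μ j * y' j (y j)) ∧
    (∀ (F : E → E) (l : ℕ → 𝕜) (x : ℕ → E) (x' : ℕ → E →L[𝕜] 𝕜),
      FredholmRep 𝕜 F l x x' →
      Filter.Tendsto (fun n => ∑ i ∈ Finset.range n, e' i (F (e i))) Filter.atTop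
        (𝓝 (∑' i, l i * x' i (x i)))) := by
  constructor
  · intro F l x x' μ y y' h1 h2
    exact tendsto_nhds_unique (matrixTrace_tendsto e e' hexp F l x x' h1)
      (matrixTrace_tendsto e e' hexp F μ y y' h2)
  · intro F l x x' h
    exact matrixTrace_tendsto e e' hexp F l x x' h
end
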